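/- Let d, e, r, k, t be positive integers with d dividing q−1 and gcd(d, e) = 1. Suppose q = q_0^m where q_0 is a prime power with q_0 ≡ 1 (mod d) and d divides m. Then f(x) := x^r · h_k(x^{e(q−1)/d})^t is a permutation polynomial of F_q if and only if gcd(k, pd) = 1 and gcd(r, (q−1)/d) = 1, where p is the characteristic of F_q. -/

import Mathlib

open Polynomial Finset

theorem stmt_3 {F : Type*} [Field F] [Fintype F] {q q0 m d e r k t p : ℕ}
    (hq : Fintype.card F = q) (hp : p.Prime) [CharP F p]
    (hq0 : IsPrimePow q0) (hqm : q = q0 ^ m) (hcong : q0 ≡ 1 [MOD d]) (hdm : d ∣ m)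
    (hd : 0 < d) (he : 0 < e) (hr : 0 < r) (hk : 0 < k) (ht : 0 < t)
    (hdvd : d ∣ q - 1) (hed : Nat.gcd d e = 1) :
    Function.Bijective (fun c : F =>
      (X ^ r * ((∑ i ∈ Finset.range k, X ^ i : F[X]).comp
        (X ^ (e * ((q - 1) / d)))) ^ t).eval c) ↔
      (Nat.gcd k (p * d) = 1 ∧ Nat.gcd r ((q - 1) / d) = 1) := by
  haveI : Fact p.Prime := ⟨hp⟩
  set s := (q - 1) / d with hsdef
  have hfun : ∀ c : F, (X ^ r * ((∑ i ∈ Finset.range k, X ^ i : F[X]).comp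
        (X ^ (e * s))) ^ t).eval c
      = c ^ r * (∑ i ∈ Finset.range k, (c ^ (e * s)) ^ i) ^ t := by
    intro c
    simp [eval_comp, eval_finset_sum]
  -- numerology
  have hq2 : 2 ≤ q := by rw [← hq]; exact Fintype.one_lt_card
  have hm : 1 ≤ m := by
    rcases Nat.eq_zero_or_pos m with h | h
    · subst h; simp at hqm; omega
    · exact h
  have hq0two : 2 ≤ q0 := hq0.two_le
  have hdq0 : d ∣ q0 - 1 := (Nat.modEq_iff_dvd' (by omega)).mp hcong.symm
  have hds : d * s = q - 1 := Nat.mul_div_cancel' hdvd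
  have hs1 : 1 ≤ s := by
    rcases Nat.eq_zero_or_pos s with h | h
    · rw [h, Nat.mul_zero] at hds; omega
    · exact h
  -- geometric sum facts
  have hSd : d ∣ ∑ i ∈ Finset.range m, q0 ^ i := by
    have h1 : (((∑ i ∈ Finset.range m, q0 ^ i : ℕ)) : ZMod d) = 0 := by
      push_cast
      have hq0cast : (q0 : ZMod d) = 1 := by
        have := (ZMod.natCast_eq_natCast_iff q0 1 d).mpr hcong
        simpa using this
      have hmcast : ((m : ℕ) : ZMod d) = 0 :=
        (ZMod.natCast_eq_zero_iff _ _).mpr hdm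
      simp [hq0cast, hmcast]
    exact (ZMod.natCast_eq_zero_iff _ _).mp h1
  have hgeom : q - 1 = (q0 - 1) * ∑ i ∈ Finset.range m, q0 ^ i := by
    have h0 : ((q - 1 : ℕ) : ℤ) = ((q0 - 1 : ℕ) : ℤ) * ((∑ i ∈ Finset.range m, q0 ^ i : ℕ) : ℤ) := by
      rw [Nat.cast_sub (by omega), Nat.cast_sub (by omega)]
      push_cast
      rw [hqm]
      push_cast
      rw [mul_comm, geom_sum_mul]
    exact_mod_cast h0
  obtain ⟨SS, hSS⟩ := hSd
  have hsval : s = (q0 - 1) * SS := by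
    have h2 : d * s = d * ((q0 - 1) * SS) := by rw [hds, hgeom, hSS]; ring
    exact Nat.eq_of_mul_eq_mul_left hd h2
  have hq0s : (q0 - 1) ∣ s := ⟨SS, hsval⟩
  have hdvds : d ∣ s := dvd_trans hdq0 hq0s
  -- q0 is a power of p
  obtain ⟨n, hpn, hcard⟩ := FiniteField.card F p
  have hq0dvd : q0 ∣ p ^ (n : ℕ) := by
    rw [← hcard, hq, hqm]; exact dvd_pow_self q0 (by omega)
  obtain ⟨j, hjn, hq0j⟩ := (Nat.dvd_prime_pow hpn).mp hq0dvd
  -- helper: the relevant "multiplicative set" elements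
  have hmu : ∀ c : F, c ≠ 0 → (c ^ (e * s)) ^ d = 1 := by
    intro c hc
    have hc1 : c ^ (q - 1) = 1 := by rw [← hq]; exact FiniteField.pow_card_sub_one_eq_one c hc
    rw [← pow_mul, show e * s * d = (q - 1) * e by rw [← hds]; ring, pow_mul, hc1, one_pow]
  have key_ne : ∀ w : F, w ^ d = 1 → Nat.gcd k (p * d) = 1 →
      (∑ i ∈ Finset.range k, w ^ i) ≠ 0 := by
    intro w hw hgcd
    have hpk : ¬ p ∣ k := by
      intro hdvd'
      have h1 : p ∣ Nat.gcd k (p * d) := Nat.dvd_gcd hdvd' (dvd_mul_right p d)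
      rw [hgcd, Nat.dvd_one] at h1
      exact hp.one_lt.ne' h1
    by_cases hw1 : w = 1
    · subst hw1
      simp only [one_pow, Finset.sum_const, Finset.card_range, nsmul_eq_mul, mul_one]
      exact fun h => hpk ((CharP.cast_eq_zero_iff F p k).mp h)
    · intro hS
      have hgm : (∑ i ∈ Finset.range k, w ^ i) * (w - 1) = w ^ k - 1 := geom_sum_mul w k
      rw [hS, zero_mul] at hgm
      have hwk : w ^ k = 1 := by
        have := hgm.symm
        rwa [sub_eq_zero] at this
      have ho : orderOf w ∣ Nat.gcd k d :=
        Nat.dvd_gcd (orderOf_dvd_of_pow_eq_one hwk) (orderOf_dvd_of_pow_eq_one hw)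
      have hkd : Nat.gcd k d = 1 := Nat.Coprime.coprime_dvd_right (dvd_mul_left d p) hgcd
      rw [hkd, Nat.dvd_one] at ho
      exact hw1 (orderOf_eq_one_iff.mp ho)
  have key_pow : ∀ w : F, w ^ d = 1 →
      (∑ i ∈ Finset.range k, w ^ i) ^ q0 = ∑ i ∈ Finset.range k, w ^ i := by
    intro w hw
    have hwq0 : w ^ q0 = w := by
      obtain ⟨a, ha⟩ := hdq0
      have h1 : w ^ (q0 - 1) = 1 := by rw [ha, pow_mul, hw, one_pow]
      calc w ^ q0 = w ^ (q0 - 1 + 1) := by rw [Nat.sub_add_cancel (by omega)]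
        _ = w := by rw [pow_succ, h1, one_mul]
    calc (∑ i ∈ Finset.range k, w ^ i) ^ q0
        = iterateFrobenius F p j (∑ i ∈ Finset.range k, w ^ i) := by
          rw [iterateFrobenius_def, hq0j]
      _ = ∑ i ∈ Finset.range k, (w ^ q0) ^ i := by
          rw [map_sum]
          refine Finset.sum_congr rfl fun i _ => ?_
          rw [map_pow, iterateFrobenius_def, ← hq0j]
      _ = ∑ i ∈ Finset.range k, w ^ i := by rw [hwq0]
  have key_s : ∀ w : F, w ^ d = 1 → (∑ i ∈ Finset.range k, w ^ i) ≠ 0 →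
      (∑ i ∈ Finset.range k, w ^ i) ^ s = 1 := by
    intro w hw hne
    have h1 : (∑ i ∈ Finset.range k, w ^ i) ^ (q0 - 1) = 1 := by
      have h2 : (∑ i ∈ Finset.range k, w ^ i) ^ (q0 - 1) * (∑ i ∈ Finset.range k, w ^ i)
          = 1 * (∑ i ∈ Finset.range k, w ^ i) := by
        rw [one_mul, ← pow_succ, Nat.sub_add_cancel (by omega), key_pow w hw]
      exact mul_right_cancel₀ hne h2
    obtain ⟨a, ha⟩ := hq0s
    rw [ha, pow_mul, h1, one_pow]
  -- generator of the unit group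
  haveI := Classical.decEq F
  obtain ⟨ζ, hζ⟩ := IsCyclic.exists_generator (α := Fˣ)
  have hord : orderOf ζ = q - 1 := by
    rw [orderOf_eq_card_of_forall_mem_zpowers hζ, Nat.card_eq_fintype_card,
      Fintype.card_units, hq]
  constructor
  · -- bijective → conditions
    intro hbij
    have hinj := hbij.injective
    have hkpd : Nat.gcd k (p * d) = 1 := by
      refine Nat.coprime_mul_iff_right.mpr ⟨?_, ?_⟩
      · rw [Nat.coprime_comm]
        rw [hp.coprime_iff_not_dvd]
        intro hpk
        have hkF : (k : F) = 0 := (CharP.cast_eq_zero_iff F p k).mpr hpk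
        have h1 : (1 : F) = 0 := by
          apply hinj
          simp only [hfun, one_pow, Finset.sum_const, Finset.card_range, nsmul_eq_mul,
            mul_one, one_mul, hkF]
          rw [zero_pow (by omega : t ≠ 0), zero_pow (by omega : r ≠ 0), zero_mul]
        exact one_ne_zero h1
      · by_contra hkd
        have hg2 : 2 ≤ Nat.gcd k d := by
          have := Nat.gcd_pos_of_pos_left d hk
          omega
        set g := Nat.gcd k d with hgdef
        have hgd : g ∣ d := Nat.gcd_dvd_right k d
        have hgk : g ∣ k := Nat.gcd_dvd_left k d
        have hd2 : 2 ≤ d := le_trans hg2 (Nat.le_of_dvd hd hgd)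
        have hgq1 : g ∣ q - 1 := dvd_trans hgd hdvd
        -- element of order g
        set w : Fˣ := ζ ^ ((q - 1) / g) with hwdef
        have hordw : orderOf w = g := by
          rw [hwdef, ← hord, orderOf_pow_orderOf_div (by omega) (hord ▸ hgq1)]
        have hw1 : w ≠ 1 := by
          intro h
          rw [h, orderOf_one] at hordw
          omega
        have hwk : (w : F) ^ k = 1 := by
          have h2 : w ^ k = 1 := orderOf_dvd_iff_pow_eq_one.mp (hordw ▸ hgk)
          rw [← Units.val_pow_eq_pow_val, h2, Units.val_one]
        -- find c with c ^ (e*s) = w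
        obtain ⟨x0, -, hx0⟩ := Nat.exists_mul_mod_eq_one_of_coprime
          (Nat.coprime_comm.mp hed) (by omega)
        set x := x0 * (d / g) with hxdef
        have hmod : e * x ≡ d / g [MOD d] := by
          have h1 : e * x0 ≡ 1 [MOD d] := by
            unfold Nat.ModEq
            rw [hx0, Nat.one_mod_eq_one.mpr (by omega)]
          have := h1.mul_right (d / g)
          rw [one_mul] at this
          rw [hxdef, ← mul_assoc]
          exact this
        have hmod2 : e * x * s ≡ (d / g) * s [MOD d * s] := hmod.mul_right' s
        have hcw : ((ζ ^ x : Fˣ) : F) ^ (e * s) = (w : F) := by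
          have h1 : (ζ ^ x) ^ (e * s) = w := by
            rw [hwdef, ← pow_mul]
            rw [pow_eq_pow_iff_modEq, hord, ← hds]
            have heq : d * s / g = (d / g) * s := by
              obtain ⟨d', hd'⟩ := hgd
              rw [hd', Nat.mul_div_cancel_left d' (by omega),
                mul_assoc, Nat.mul_div_cancel_left _ (by omega)]
            rw [heq]
            calc x * (e * s) = e * x * s := by ring
              _ ≡ (d / g) * s [MOD d * s] := hmod2
          rw [← Units.val_pow_eq_pow_val, h1]
        -- h_k vanishes at w
        have hSw : (∑ i ∈ Finset.range k, (w : F) ^ i) = 0 := by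
          have hgm : (∑ i ∈ Finset.range k, (w : F) ^ i) * ((w : F) - 1) = (w : F) ^ k - 1 :=
            geom_sum_mul _ k
          rw [hwk, sub_self] at hgm
          rcases mul_eq_zero.mp hgm with h | h
          · exact h
          · exfalso
            apply hw1
            have : (w : F) = 1 := by
              have := sub_eq_zero.mp h
              exact this
            exact Units.ext (by simpa using this)
        have hc0 : ((ζ ^ x : Fˣ) : F) = 0 := by
          apply hinj
          simp only [hfun]
          rw [hcw, hSw, zero_pow (by omega), mul_zero]
          rw [zero_pow (by omega), zero_mul]
        exact Units.ne_zero _ hc0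
    refine ⟨hkpd, ?_⟩
    by_contra hrs
    have hg2 : 2 ≤ Nat.gcd r s := by
      have := Nat.gcd_pos_of_pos_left s hr
      omega
    set g := Nat.gcd r s with hgdef
    have hgr : g ∣ r := Nat.gcd_dvd_left r s
    have hgs : g ∣ s := Nat.gcd_dvd_right r s
    have hgq1 : g ∣ q - 1 := dvd_trans hgs ⟨d, by rw [← hds]; ring⟩
    set w : Fˣ := ζ ^ ((q - 1) / g) with hwdef
    have hordw : orderOf w = g := by
      rw [hwdef, ← hord, orderOf_pow_orderOf_div (by omega) (hord ▸ hgq1)]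
    have hw1 : w ≠ 1 := by
      intro h
      rw [h, orderOf_one] at hordw
      omega
    have hwr : (w : F) ^ r = 1 := by
      have h2 : w ^ r = 1 := orderOf_dvd_iff_pow_eq_one.mp (hordw ▸ hgr)
      rw [← Units.val_pow_eq_pow_val, h2, Units.val_one]
    have hws : (w : F) ^ s = 1 := by
      have h2 : w ^ s = 1 := orderOf_dvd_iff_pow_eq_one.mp (hordw ▸ hgs)
      rw [← Units.val_pow_eq_pow_val, h2, Units.val_one]
    have heq : ((w : F)) = 1 := by
      apply hinj
      simp only [hfun]
      rw [show e * s = s * e from mul_comm e s, pow_mul, hws, one_pow, hwr, one_pow]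
      simp
    exact hw1 (Units.ext (by simpa using heq))
  · -- conditions → bijective
    rintro ⟨hkpd, hrs⟩
    have hrd : Nat.Coprime r d := Nat.Coprime.coprime_dvd_right hdvds hrs
    apply Finite.injective_iff_bijective.mp
    intro a b hab
    simp only [hfun] at hab
    by_cases ha0 : a = 0
    · by_cases hb0 : b = 0
      · rw [ha0, hb0]
      · exfalso
        rw [ha0, zero_pow (by omega), zero_mul] at hab
        have hSb : (∑ i ∈ Finset.range k, (b ^ (e * s)) ^ i) ≠ 0 := key_ne _ (hmu b hb0) hkpd
        exact (mul_ne_zero (pow_ne_zero r hb0) (pow_ne_zero t hSb)) hab.symm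
    · by_cases hb0 : b = 0
      · exfalso
        rw [hb0, zero_pow (by omega), zero_mul] at hab
        have hSa : (∑ i ∈ Finset.range k, (a ^ (e * s)) ^ i) ≠ 0 := key_ne _ (hmu a ha0) hkpd
        exact (mul_ne_zero (pow_ne_zero r ha0) (pow_ne_zero t hSa)) hab
      · -- both nonzero
        have hSa1 : (∑ i ∈ Finset.range k, (a ^ (e * s)) ^ i) ^ s = 1 :=
          key_s _ (hmu a ha0) (key_ne _ (hmu a ha0) hkpd)
        have hSb1 : (∑ i ∈ Finset.range k, (b ^ (e * s)) ^ i) ^ s = 1 :=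
          key_s _ (hmu b hb0) (key_ne _ (hmu b hb0) hkpd)
        have e1 : (a ^ r * (∑ i ∈ Finset.range k, (a ^ (e * s)) ^ i) ^ t) ^ s = (a ^ s) ^ r := by
          calc (a ^ r * (∑ i ∈ Finset.range k, (a ^ (e * s)) ^ i) ^ t) ^ s
              = (a ^ s) ^ r * ((∑ i ∈ Finset.range k, (a ^ (e * s)) ^ i) ^ s) ^ t := by ring
            _ = (a ^ s) ^ r := by rw [hSa1, one_pow, mul_one]
        have e2 : (b ^ r * (∑ i ∈ Finset.range k, (b ^ (e * s)) ^ i) ^ t) ^ s = (b ^ s) ^ r := by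
          calc (b ^ r * (∑ i ∈ Finset.range k, (b ^ (e * s)) ^ i) ^ t) ^ s
              = (b ^ s) ^ r * ((∑ i ∈ Finset.range k, (b ^ (e * s)) ^ i) ^ s) ^ t := by ring
            _ = (b ^ s) ^ r := by rw [hSb1, one_pow, mul_one]
        have h1 : (a ^ s) ^ r = (b ^ s) ^ r := by rw [← e1, ← e2, hab]
        have hbs0 : b ^ s ≠ 0 := pow_ne_zero s hb0
        have hz : a ^ s = b ^ s := by
          have hzr : (a ^ s / b ^ s) ^ r = 1 := by
            rw [div_pow, h1, div_self (pow_ne_zero r hbs0)]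
          have hzd : (a ^ s / b ^ s) ^ d = 1 := by
            rw [div_pow, ← pow_mul, ← pow_mul]
            have hsd : s * d = q - 1 := by rw [← hds]; ring
            rw [hsd, ← hq, FiniteField.pow_card_sub_one_eq_one a ha0,
              FiniteField.pow_card_sub_one_eq_one b hb0, div_one]
          have ho : orderOf (a ^ s / b ^ s) ∣ Nat.gcd r d :=
            Nat.dvd_gcd (orderOf_dvd_of_pow_eq_one hzr) (orderOf_dvd_of_pow_eq_one hzd)
          rw [hrd, Nat.dvd_one] at ho
          exact (div_eq_one_iff_eq hbs0).mp (orderOf_eq_one_iff.mp ho)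
        have hzes : a ^ (e * s) = b ^ (e * s) := by
          rw [mul_comm e s, pow_mul, pow_mul, hz]
        rw [hzes] at hab
        have hSb : (∑ i ∈ Finset.range k, (b ^ (e * s)) ^ i) ≠ 0 := key_ne _ (hmu b hb0) hkpd
        have har : a ^ r = b ^ r := mul_right_cancel₀ (pow_ne_zero t hSb) hab
        have hwr : (a / b) ^ r = 1 := by rw [div_pow, har, div_self (pow_ne_zero r hb0)]
        have hwz : (a / b) ^ s = 1 := by rw [div_pow, hz, div_self hbs0]
        have ho : orderOf (a / b) ∣ Nat.gcd r s :=
          Nat.dvd_gcd (orderOf_dvd_of_pow_eq_one hwr) (orderOf_dvd_of_pow_eq_one hwz)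
        rw [hrs, Nat.dvd_one] at ho
        exact (div_eq_one_iff_eq hb0).mp (orderOf_eq_one_iff.mp ho)
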